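/- arXiv:2103.10024 — 5 statements merged into one kernel-verified Lean document; each statement's English description precedes it below -/
import Mathlib

section
/- Let n ≥ 1 and let E be a symmetric edge set on vertices {1,…,n} with no self-loops, with relative rotations R_ij ∈ SO(3) for (i,j) ∈ E satisfying R_ji = R_ijᵀ. Let R̃ be the associated 3n×3n block measurement matrix. Let R*_1,…,R*_n ∈ SO(3) and define the 3n×3n block-diagonal matrix Λ with 3×3 diagonal blocks Λ_i = Σ_{j : (i,j)∈E} R_ij (R*_j)ᵀ R*_i. If Λ − R̃ is positive semidefinite, then (R*_1,…,R*_n) is a global minimizer of the rotation averaging objective: for all R_1,…,R_n ∈ SO(3), Σ_{(i,j)∈E} ‖R_i R_ij − R_j‖_F² ≥ Σ_{(i,j)∈E} ‖R*_i R_ij − R*_j‖_F². -/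
open Matrix BigOperators

/-- `SO(3)`: real 3×3 matrices with `RᵀR = I` and `det R = 1`. -/
def SO3 (R : Matrix (Fin 3) (Fin 3) ℝ) : Prop :=
  Rᵀ * R = 1 ∧ R.det = 1

/-- Squared Frobenius norm of a 3×3 real matrix. -/
noncomputable def frobSq (A : Matrix (Fin 3) (Fin 3) ℝ) : ℝ :=
  Matrix.trace (Aᵀ * A)

lemma frob_edge (A B C : Matrix (Fin 3) (Fin 3) ℝ)
    (hA : Aᵀ * A = 1) (hB : Bᵀ * B = 1) (hC : Cᵀ * C = 1) :
    frobSq (A * B - C) = 6 - 2 * Matrix.trace (A * B * Cᵀ) := by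
  have key : (A * B - C)ᵀ * (A * B - C)
      = Bᵀ * (Aᵀ * A) * B - (Bᵀ * Aᵀ) * C - Cᵀ * (A * B) + Cᵀ * C := by
    simp [Matrix.transpose_sub, Matrix.transpose_mul, sub_mul, mul_sub]
    noncomm_ring
  have h1 : Bᵀ * (Aᵀ * A) * B = 1 := by rw [hA, Matrix.mul_one, hB]
  have h2 : Matrix.trace ((Bᵀ * Aᵀ) * C) = Matrix.trace (A * B * Cᵀ) := by
    have : (Bᵀ * Aᵀ) * C = ((Cᵀ * (A * B)))ᵀ := by
      simp [Matrix.transpose_mul, Matrix.mul_assoc]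
    rw [this, Matrix.trace_transpose, Matrix.trace_mul_comm]
  have h3 : Matrix.trace (Cᵀ * (A * B)) = Matrix.trace (A * B * Cᵀ) := by
    rw [Matrix.trace_mul_comm]
  rw [frobSq, key]
  rw [Matrix.trace_add, Matrix.trace_sub, Matrix.trace_sub, h1, hC, h2, h3]
  simp [Matrix.trace_one]
  ring

lemma sum_over_E {n : ℕ} (E : Finset (Fin n × Fin n)) (f : Fin n × Fin n → ℝ) :
    ∑ i, ∑ j, (if (i, j) ∈ E then f (i, j) else 0) = ∑ e ∈ E, f e := by
  have h := Fintype.sum_prod_type (f := fun p : Fin n × Fin n => if p ∈ E then f p else 0)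
  rw [← h]
  simp [Finset.sum_ite_mem]

lemma comm3_rev {α β γ : Type*} [Fintype α] [Fintype β] [Fintype γ]
    (f : α → β → γ → ℝ) :
    ∑ a : α, ∑ b : β, ∑ c : γ, f a b c = ∑ c, ∑ b, ∑ a, f a b c := by
  rw [show (∑ a : α, ∑ b : β, ∑ c : γ, f a b c) = ∑ a, ∑ c, ∑ b, f a b c from
    Finset.sum_congr rfl fun a _ => Finset.sum_comm]
  rw [Finset.sum_comm]
  exact Finset.sum_congr rfl fun c _ => Finset.sum_comm

lemma comm5 {α β γ δ ε : Type*} [Fintype α] [Fintype β] [Fintype γ] [Fintype δ] [Fintype ε]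
    (f : α → β → γ → δ → ε → ℝ) :
    ∑ c : α, ∑ i : β, ∑ a : γ, ∑ j : δ, ∑ b : ε, f c i a j b
      = ∑ i, ∑ j, ∑ a, ∑ b, ∑ c, f c i a j b := by
  rw [Finset.sum_comm]
  refine Finset.sum_congr rfl fun i _ => ?_
  rw [Finset.sum_comm]
  rw [show (∑ a : γ, ∑ c : α, ∑ j : δ, ∑ b : ε, f c i a j b)
      = ∑ a : γ, ∑ j : δ, ∑ c : α, ∑ b : ε, f c i a j b from
    Finset.sum_congr rfl fun a _ => Finset.sum_comm]
  rw [Finset.sum_comm]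
  refine Finset.sum_congr rfl fun j _ => Finset.sum_congr rfl fun a _ => Finset.sum_comm

lemma quad_expand {n : ℕ} (M : Matrix (Fin n × Fin 3) (Fin n × Fin 3) ℝ)
    (R : Fin n → Matrix (Fin 3) (Fin 3) ℝ) :
    ∑ c : Fin 3, (fun p : Fin n × Fin 3 => R p.1 c p.2) ⬝ᵥ
        (M *ᵥ (fun p : Fin n × Fin 3 => R p.1 c p.2))
      = ∑ i, ∑ j, ∑ a, ∑ b, M (i, a) (j, b) * (∑ c, R i c a * R j c b) := by
  simp only [dotProduct, Matrix.mulVec, Finset.mul_sum, Fintype.sum_prod_type]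
  rw [comm5 (f := fun c i a j b => R i c a * (M (i, a) (j, b) * R j c b))]
  refine Finset.sum_congr rfl fun i _ => Finset.sum_congr rfl fun j _ =>
    Finset.sum_congr rfl fun a _ => Finset.sum_congr rfl fun b _ => ?_
  exact Finset.sum_congr rfl fun c _ => by ring

lemma trace_expand (A B M : Matrix (Fin 3) (Fin 3) ℝ) :
    ∑ a, ∑ b, M a b * (∑ c, A c a * B c b) = Matrix.trace (A * M * Bᵀ) := by
  simp only [Finset.mul_sum]
  rw [comm3_rev (f := fun a b c => M a b * (A c a * B c b))]
  simp only [Matrix.trace, Matrix.diag, Matrix.mul_apply, Matrix.transpose_apply,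
    Finset.sum_mul]
  refine Finset.sum_congr rfl fun c _ => Finset.sum_congr rfl fun b _ =>
    Finset.sum_congr rfl fun a _ => by ring

/-- Sufficient optimality condition for rotation averaging: if `Λ - R̃ ⪰ 0`
then `(R*_1, …, R*_n)` is a global minimizer of the chordal rotation averaging
objective. -/
theorem sufficient_optimality_condition
    (n : ℕ) (hn : 1 ≤ n)
    (E : Finset (Fin n × Fin n))
    (hE_irrefl : ∀ i j : Fin n, (i, j) ∈ E → i ≠ j)
    (hE_symm : ∀ i j : Fin n, (i, j) ∈ E → (j, i) ∈ E)
    (Rij : Fin n → Fin n → Matrix (Fin 3) (Fin 3) ℝ)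
    (hRij : ∀ i j : Fin n, (i, j) ∈ E → SO3 (Rij i j))
    (hRij_symm : ∀ i j : Fin n, (i, j) ∈ E → Rij j i = (Rij i j)ᵀ)
    (Rstar : Fin n → Matrix (Fin 3) (Fin 3) ℝ)
    (hRstar : ∀ i, SO3 (Rstar i))
    (Rtil : Matrix (Fin n × Fin 3) (Fin n × Fin 3) ℝ)
    (hRtil : ∀ (i j : Fin n) (a b : Fin 3),
      Rtil (i, a) (j, b) = if (i, j) ∈ E then Rij i j a b else 0)
    (Lam : Matrix (Fin n × Fin 3) (Fin n × Fin 3) ℝ)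
    (hLam : ∀ (i j : Fin n) (a b : Fin 3),
      Lam (i, a) (j, b) =
        if i = j then
          (∑ k ∈ Finset.univ.filter (fun k : Fin n => (i, k) ∈ E),
            Rij i k * (Rstar k)ᵀ * Rstar i) a b
        else 0)
    (hPSD : ∀ x : Fin n × Fin 3 → ℝ, 0 ≤ x ⬝ᵥ ((Lam - Rtil) *ᵥ x)) :
    ∀ R : Fin n → Matrix (Fin 3) (Fin 3) ℝ, (∀ i, SO3 (R i)) →
      ∑ e ∈ E, frobSq (Rstar e.1 * Rij e.1 e.2 - Rstar e.2) ≤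
        ∑ e ∈ E, frobSq (R e.1 * Rij e.1 e.2 - R e.2) := by
  intro R hR
  classical
  -- rewrite the objective via traces
  have hobj : ∀ Q : Fin n → Matrix (Fin 3) (Fin 3) ℝ, (∀ i, SO3 (Q i)) →
      ∑ e ∈ E, frobSq (Q e.1 * Rij e.1 e.2 - Q e.2)
        = 6 * (E.card : ℝ)
          - 2 * ∑ e ∈ E, Matrix.trace (Q e.1 * Rij e.1 e.2 * (Q e.2)ᵀ) := by
    intro Q hQ
    have h1 : ∀ e ∈ E, frobSq (Q e.1 * Rij e.1 e.2 - Q e.2)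
        = 6 - 2 * Matrix.trace (Q e.1 * Rij e.1 e.2 * (Q e.2)ᵀ) := by
      intro e he
      exact frob_edge _ _ _ (hQ e.1).1 (hRij e.1 e.2 (by simpa using he)).1 (hQ e.2).1
    rw [Finset.sum_congr rfl h1, Finset.sum_sub_distrib, Finset.sum_const,
      ← Finset.mul_sum, nsmul_eq_mul]
    ring
  rw [hobj R hR, hobj Rstar hRstar]
  have key : ∑ e ∈ E, Matrix.trace (R e.1 * Rij e.1 e.2 * (R e.2)ᵀ)
      ≤ ∑ e ∈ E, Matrix.trace (Rstar e.1 * Rij e.1 e.2 * (Rstar e.2)ᵀ) := by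
    set L : Fin n → Matrix (Fin 3) (Fin 3) ℝ :=
      fun i => ∑ k ∈ Finset.univ.filter (fun k : Fin n => (i, k) ∈ E),
        Rij i k * (Rstar k)ᵀ * Rstar i with hL
    have hx : 0 ≤ ∑ c : Fin 3, (fun p : Fin n × Fin 3 => R p.1 c p.2) ⬝ᵥ
        ((Lam - Rtil) *ᵥ (fun p : Fin n × Fin 3 => R p.1 c p.2)) :=
      Finset.sum_nonneg fun c _ => hPSD _
    rw [quad_expand] at hx
    have hsplit : ∑ i, ∑ j, ∑ a, ∑ b, (Lam - Rtil) (i, a) (j, b) * (∑ c, R i c a * R j c b)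
        = (∑ i, ∑ j, ∑ a, ∑ b, Lam (i, a) (j, b) * (∑ c, R i c a * R j c b))
          - ∑ i, ∑ j, ∑ a, ∑ b, Rtil (i, a) (j, b) * (∑ c, R i c a * R j c b) := by
      simp [Matrix.sub_apply, sub_mul, Finset.sum_sub_distrib]
    rw [hsplit] at hx
    have horth : ∀ (i : Fin n) (a b : Fin 3),
        (∑ c, R i c a * R i c b) = if a = b then (1:ℝ) else 0 := by
      intro i a b
      have h := congrFun (congrFun (hR i).1 a) b
      simpa [Matrix.mul_apply, Matrix.transpose_apply, Matrix.one_apply] using h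
    have hRtilpart : ∑ i, ∑ j, ∑ a, ∑ b, Rtil (i, a) (j, b) * (∑ c, R i c a * R j c b)
        = ∑ e ∈ E, Matrix.trace (R e.1 * Rij e.1 e.2 * (R e.2)ᵀ) := by
      rw [← sum_over_E E (fun e => Matrix.trace (R e.1 * Rij e.1 e.2 * (R e.2)ᵀ))]
      refine Finset.sum_congr rfl fun i _ => Finset.sum_congr rfl fun j _ => ?_
      by_cases h : (i, j) ∈ E
      · simp only [hRtil, h, if_true]
        exact trace_expand _ _ _
      · simp [hRtil, h]
    have hLampart : ∑ i, ∑ j, ∑ a, ∑ b, Lam (i, a) (j, b) * (∑ c, R i c a * R j c b)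
        = ∑ i, Matrix.trace (L i) := by
      refine Finset.sum_congr rfl fun i _ => ?_
      have hj : ∀ j : Fin n, (∑ a, ∑ b, Lam (i, a) (j, b) * (∑ c, R i c a * R j c b))
          = if i = j then Matrix.trace (L i) else 0 := by
        intro j
        by_cases h : i = j
        · subst h
          simp only [hLam, if_true, horth]
          simp [Matrix.trace, Matrix.diag, mul_ite, mul_one, mul_zero,
            Finset.sum_ite_eq]
          rfl
        · simp [hLam, h]
      rw [Finset.sum_congr rfl (fun j _ => hj j)]
      simp
    have hLtrace : ∑ i, Matrix.trace (L i)
        = ∑ e ∈ E, Matrix.trace (Rstar e.1 * Rij e.1 e.2 * (Rstar e.2)ᵀ) := by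
      rw [← sum_over_E E (fun e => Matrix.trace (Rstar e.1 * Rij e.1 e.2 * (Rstar e.2)ᵀ))]
      refine Finset.sum_congr rfl fun i _ => ?_
      rw [hL]
      rw [Matrix.trace_sum, Finset.sum_filter]
      refine Finset.sum_congr rfl fun k _ => ?_
      by_cases h : (i, k) ∈ E
      · simp only [h, if_true]
        rw [Matrix.trace_mul_comm, ← Matrix.mul_assoc]
      · simp [h]
    rw [hRtilpart, hLampart, hLtrace] at hx
    linarith
  linarith
end

section
/- Let A be a real 3×3 matrix with A = U D Vᵀ, where U and V are real 3×3 orthogonal matrices and D is diagonal. Define D̂ = D and V̂ = V if det(U)·det(V) = 1, and D̂ = −D and V̂ = −V if det(U)·det(V) = −1. If Σ̂ ∈ SO(3) minimizes tr(D̂ Σ) over all Σ ∈ SO(3), then X = V̂ Σ̂ Uᵀ belongs to SO(3) and minimizes tr(A X) over all X ∈ SO(3). -/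
open Matrix

lemma losso_aux (U Dh Vh : Matrix (Fin 3) (Fin 3) ℝ)
    (hU : Uᵀ * U = 1) (hVh : Vhᵀ * Vh = 1) (hdet : U.det * Vh.det = 1)
    (Sig : Matrix (Fin 3) (Fin 3) ℝ) (hSig : SO3 Sig)
    (hmin : ∀ S : Matrix (Fin 3) (Fin 3) ℝ, SO3 S →
      Matrix.trace (Dh * Sig) ≤ Matrix.trace (Dh * S)) :
    SO3 (Vh * Sig * Uᵀ) ∧
    ∀ X : Matrix (Fin 3) (Fin 3) ℝ, SO3 X →
      Matrix.trace ((U * Dh * Vhᵀ) * (Vh * Sig * Uᵀ)) ≤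
        Matrix.trace ((U * Dh * Vhᵀ) * X) := by
  obtain ⟨hSo, hSd⟩ := hSig
  have hUU : U * Uᵀ = 1 := mul_eq_one_comm.mp hU
  have hVV : Vh * Vhᵀ = 1 := mul_eq_one_comm.mp hVh
  have key : ∀ M : Matrix (Fin 3) (Fin 3) ℝ,
      Matrix.trace ((U * Dh * Vhᵀ) * (Vh * M * Uᵀ)) = Matrix.trace (Dh * M) := by
    intro M
    calc Matrix.trace ((U * Dh * Vhᵀ) * (Vh * M * Uᵀ))
        = Matrix.trace (U * (Dh * M * Uᵀ)) := by
          rw [show (U * Dh * Vhᵀ) * (Vh * M * Uᵀ) = U * (Dh * ((Vhᵀ * Vh) * (M * Uᵀ))) by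
            simp only [Matrix.mul_assoc], hVh]
          simp [Matrix.mul_assoc]
      _ = Matrix.trace (Dh * M * Uᵀ * U) := by
          rw [Matrix.trace_mul_comm, Matrix.mul_assoc]
      _ = Matrix.trace (Dh * M) := by rw [Matrix.mul_assoc, hU, Matrix.mul_one]
  constructor
  · constructor
    · have : (Vh * Sig * Uᵀ)ᵀ * (Vh * Sig * Uᵀ) = U * (Sigᵀ * ((Vhᵀ * Vh) * (Sig * Uᵀ))) := by
        simp [Matrix.transpose_mul, Matrix.mul_assoc]
      rw [this, hVh]
      simp only [Matrix.one_mul, ← Matrix.mul_assoc, hSo]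
      simpa using hUU
    · simp only [Matrix.det_mul, Matrix.det_transpose, hSd]
      linarith [hdet]
  · intro X hX
    obtain ⟨hXo, hXd⟩ := hX
    have hS : SO3 (Vhᵀ * X * U) := by
      constructor
      · have : (Vhᵀ * X * U)ᵀ * (Vhᵀ * X * U) = Uᵀ * (Xᵀ * ((Vh * Vhᵀ) * (X * U))) := by
          simp [Matrix.transpose_mul, Matrix.mul_assoc]
        rw [this, hVV]
        simp only [Matrix.one_mul, ← Matrix.mul_assoc, hXo]
        simpa using hU
      · simp only [Matrix.det_mul, Matrix.det_transpose, hXd]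
        linarith [hdet]
    have hX' : X = Vh * (Vhᵀ * X * U) * Uᵀ := by
      calc X = (Vh * Vhᵀ) * X * (U * Uᵀ) := by rw [hVV, hUU]; simp
        _ = Vh * (Vhᵀ * X * U) * Uᵀ := by simp only [Matrix.mul_assoc]
    calc Matrix.trace ((U * Dh * Vhᵀ) * (Vh * Sig * Uᵀ)) = Matrix.trace (Dh * Sig) := key Sig
      _ ≤ Matrix.trace (Dh * (Vhᵀ * X * U)) := hmin _ hS
      _ = Matrix.trace ((U * Dh * Vhᵀ) * X) := by
          conv_rhs => rw [hX']
          rw [key]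

/-- Reduction of LOSSO via SVD: if `Σ̂` minimizes `tr(D̂ Σ)` over `SO(3)`, then
`X = V̂ Σ̂ Uᵀ` minimizes `tr(A X)` over `SO(3)`. -/
theorem losso_svd_reduction
    (A U D V : Matrix (Fin 3) (Fin 3) ℝ)
    (hU : Uᵀ * U = 1) (hV : Vᵀ * V = 1) (hD : D.IsDiag)
    (hA : A = U * D * Vᵀ)
    (Dhat Vhat : Matrix (Fin 3) (Fin 3) ℝ)
    (hcase : (U.det * V.det = 1 ∧ Dhat = D ∧ Vhat = V) ∨
             (U.det * V.det = -1 ∧ Dhat = -D ∧ Vhat = -V))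
    (Sig : Matrix (Fin 3) (Fin 3) ℝ) (hSig : SO3 Sig)
    (hmin : ∀ S : Matrix (Fin 3) (Fin 3) ℝ, SO3 S →
      Matrix.trace (Dhat * Sig) ≤ Matrix.trace (Dhat * S)) :
    SO3 (Vhat * Sig * Uᵀ) ∧
    ∀ X : Matrix (Fin 3) (Fin 3) ℝ, SO3 X →
      Matrix.trace (A * (Vhat * Sig * Uᵀ)) ≤ Matrix.trace (A * X) := by
  rcases hcase with ⟨hdet, hDh, hVh⟩ | ⟨hdet, hDh, hVh⟩
  · subst hDh hVh hA
    exact losso_aux U Dhat Vhat hU hV hdet Sig hSig hmin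
  · subst hDh hVh hA
    have hVh' : (-V)ᵀ * (-V) = 1 := by simpa using hV
    have hdet' : U.det * (-V).det = 1 := by
      rw [Matrix.det_neg]
      simp only [Fintype.card_fin]
      ring_nf
      ring_nf at hdet
      linarith
    have hA' : U * D * Vᵀ = U * (-D) * (-V)ᵀ := by simp
    rw [hA']
    exact losso_aux U (-D) (-V) hU hVh' hdet' Sig hSig hmin
end

section
/- Let σ_1, σ_2, σ_3 be nonnegative real numbers and let f(u,θ) = Σ_{i=1}^{3} σ_i (cos θ + (1 − cos θ) u_i²), defined for u = (u_1,u_2,u_3) ∈ ℝ³ with u_1² + u_2² + u_3² = 1 and θ ∈ [−π, π]. Then the minimum value of f over this feasible set equals 2·min(σ_1,σ_2,σ_3) − (σ_1 + σ_2 + σ_3), and it is attained at θ = π and u equал to the standard basis vector e_{i_m}, where i_m is an index attaining min(σ_1,σ_2,σ_3). -/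
open Real BigOperators

/-- Minimization of `Σ σ_i (cos θ + (1 − cos θ) u_i²)` for nonnegative `σ_i`:
the minimum over `{u : ‖u‖ = 1} × [−π, π]` equals
`2 min(σ_1,σ_2,σ_3) − (σ_1 + σ_2 + σ_3)`, attained at `θ = π` and `u = e_{i_m}`. -/
theorem axis_angle_min_nonneg
    (σ : Fin 3 → ℝ) (hσ : ∀ i, 0 ≤ σ i)
    (i_m : Fin 3) (him : ∀ i, σ i_m ≤ σ i) :
    (∀ (u : Fin 3 → ℝ) (θ : ℝ),
      (u 0) ^ 2 + (u 1) ^ 2 + (u 2) ^ 2 = 1 → -π ≤ θ → θ ≤ π →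
      2 * σ i_m - (σ 0 + σ 1 + σ 2) ≤
        ∑ i : Fin 3, σ i * (Real.cos θ + (1 - Real.cos θ) * (u i) ^ 2)) ∧
    (∑ i : Fin 3, σ i *
        (Real.cos π + (1 - Real.cos π) * ((if i = i_m then (1 : ℝ) else 0)) ^ 2)
      = 2 * σ i_m - (σ 0 + σ 1 + σ 2)) ∧
    (((if (0 : Fin 3) = i_m then (1 : ℝ) else 0)) ^ 2 +
      ((if (1 : Fin 3) = i_m then (1 : ℝ) else 0)) ^ 2 +
      ((if (2 : Fin 3) = i_m then (1 : ℝ) else 0)) ^ 2 = 1) := by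
  refine ⟨?_, ?_, ?_⟩
  · intro u θ hu _ _
    have hc1 : -1 ≤ Real.cos θ := Real.neg_one_le_cos θ
    have hc2 : Real.cos θ ≤ 1 := Real.cos_le_one θ
    simp only [Fin.sum_univ_three]
    have h0 := him 0; have h1 := him 1; have h2 := him 2
    have key : (1 - Real.cos θ) * σ i_m * (u 0 ^ 2 + u 1 ^ 2 + u 2 ^ 2)
        = (1 - Real.cos θ) * σ i_m * 1 := by rw [hu]
    nlinarith [key, mul_nonneg (mul_nonneg (sub_nonneg.2 hc2) (sub_nonneg.2 h0)) (sq_nonneg (u 0)),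
      mul_nonneg (mul_nonneg (sub_nonneg.2 hc2) (sub_nonneg.2 h1)) (sq_nonneg (u 1)),
      mul_nonneg (mul_nonneg (sub_nonneg.2 hc2) (sub_nonneg.2 h2)) (sq_nonneg (u 2)),
      mul_nonneg (by linarith : (0:ℝ) ≤ 1 + Real.cos θ)
        (by nlinarith [hσ 0, hσ 1, hσ 2, him i_m] : (0:ℝ) ≤ σ 0 + σ 1 + σ 2 - σ i_m)]
  · simp only [Fin.sum_univ_three, Real.cos_pi]
    fin_cases i_m <;> simp [Fin.ext_iff] <;> ring
  · fin_cases i_m <;> simp [Fin.ext_iff]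
end

section
/- Let A be a real 3×3 matrix with A = U D Vᵀ, where U and V are real 3×3 orthogonal matrices, D = diag(σ_1, σ_2, σ_3) with all σ_i ≥ 0, and det(U)·det(V) = 1. Let i_m be an index attaining min(σ_1,σ_2,σ_3), and let Σ̂ be the diagonal matrix whose i_m-th diagonal entry is 1 and whose other two diagonal entries are −1. Then X = V Σ̂ Uᵀ belongs to SO(3), tr(A X) = 2 σ_{i_m} − (σ_1 + σ_2 + σ_3), and tr(A X) ≤ tr(A Y) for every Y ∈ SO(3). -/
open Matrix

lemma so3_diag_lb (W : Matrix (Fin 3) (Fin 3) ℝ) (h : Wᵀ * W = 1) (i : Fin 3) :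
    -1 ≤ W i i := by
  have hc := congrFun (congrFun h i) i
  simp only [Matrix.mul_apply, Matrix.one_apply_eq, Matrix.transpose_apply] at hc
  have hle : W i i * W i i ≤ ∑ k, W k i * W k i :=
    Finset.single_le_sum (f := fun k => W k i * W k i)
      (fun k _ => mul_self_nonneg _) (Finset.mem_univ i)
  rw [hc] at hle
  nlinarith [hle]

lemma so3_trace_ge (W : Matrix (Fin 3) (Fin 3) ℝ) (h : Wᵀ * W = 1) (hd : W.det = 1) :
    -1 ≤ W 0 0 + W 1 1 + W 2 2 := by
  have h' : W * Wᵀ = 1 := mul_eq_one_comm.mp h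
  have hadj : W.adjugate = Wᵀ := by
    have h1 : W * W.adjugate = 1 := by rw [Matrix.mul_adjugate, hd, one_smul]
    have hinv : Invertible W := invertibleOfRightInverse W _ h'
    calc W.adjugate = ⅟W * (W * W.adjugate) := by rw [← mul_assoc, invOf_mul_self, one_mul]
    _ = ⅟W * (W * Wᵀ) := by rw [h1, h']
    _ = Wᵀ := by rw [← mul_assoc, invOf_mul_self, one_mul]
  rw [Matrix.adjugate_fin_three] at hadj
  have c00 := congrFun (congrFun hadj 0) 0
  have c11 := congrFun (congrFun hadj 1) 1
  have c22 := congrFun (congrFun hadj 2) 2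
  simp [Matrix.transpose_apply] at c00 c11 c22
  have hc := fun i j => congrFun (congrFun h i) j
  simp only [Matrix.mul_apply, Fin.sum_univ_three, Matrix.one_apply, Matrix.transpose_apply] at hc
  have h00 := hc 0 0; have h11 := hc 1 1; have h22 := hc 2 2
  simp at h00 h11 h22
  nlinarith [sq_nonneg (W 2 1 - W 1 2), sq_nonneg (W 0 2 - W 2 0), sq_nonneg (W 1 0 - W 0 1),
    c00, c11, c22, h00, h11, h22]

/-- Closed-form LOSSO solution in the case `det(U)·det(V) = 1`:
`X = V Σ̂ Uᵀ` with `Σ̂ = diag(±1)` having `+1` at a minimal singular value index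
is optimal, with optimal value `2σ_{i_m} − (σ_1 + σ_2 + σ_3)`. -/
theorem losso_closed_form_det_pos
    (A U V : Matrix (Fin 3) (Fin 3) ℝ) (σ : Fin 3 → ℝ)
    (hσ : ∀ i, 0 ≤ σ i)
    (hU : Uᵀ * U = 1) (hV : Vᵀ * V = 1)
    (hdet : U.det * V.det = 1)
    (hA : A = U * Matrix.diagonal σ * Vᵀ)
    (i_m : Fin 3) (him : ∀ i, σ i_m ≤ σ i)
    (Sighat : Matrix (Fin 3) (Fin 3) ℝ)
    (hSighat : Sighat = Matrix.diagonal (fun i => if i = i_m then (1 : ℝ) else -1)) :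
    SO3 (V * Sighat * Uᵀ) ∧
    Matrix.trace (A * (V * Sighat * Uᵀ)) = 2 * σ i_m - (σ 0 + σ 1 + σ 2) ∧
    ∀ Y : Matrix (Fin 3) (Fin 3) ℝ, SO3 Y →
      Matrix.trace (A * (V * Sighat * Uᵀ)) ≤ Matrix.trace (A * Y) := by
  have hUU : U * Uᵀ = 1 := mul_eq_one_comm.mp hU
  have hVV : V * Vᵀ = 1 := mul_eq_one_comm.mp hV
  have hSS : Sighat * Sighat = 1 := by
    rw [hSighat, Matrix.diagonal_mul_diagonal]
    have he : (fun i => (if i = i_m then (1:ℝ) else -1) * (if i = i_m then (1:ℝ) else -1))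
        = fun _ => (1:ℝ) := by
      funext i; by_cases hi : i = i_m <;> simp [hi]
    rw [he, Matrix.diagonal_one]
  have hST : Sighatᵀ = Sighat := by rw [hSighat, Matrix.diagonal_transpose]
  have hdetS : Sighat.det = 1 := by
    rw [hSighat, Matrix.det_diagonal, Fin.prod_univ_three]
    fin_cases i_m <;> norm_num [Fin.ext_iff]
  -- Part 1 : SO3
  have hSO : SO3 (V * Sighat * Uᵀ) := by
    constructor
    · rw [Matrix.transpose_mul, Matrix.transpose_mul, Matrix.transpose_transpose, hST]
      calc Uᵀᵀ * (Sighat * Vᵀ) * (V * Sighat * Uᵀ)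
          = U * (Sighat * (Vᵀ * V) * Sighat) * Uᵀ := by
            rw [Matrix.transpose_transpose]; noncomm_ring
      _ = 1 := by rw [hV, mul_one, hSS, mul_one, hUU]
    · rw [Matrix.det_mul, Matrix.det_mul, hdetS, Matrix.det_transpose, mul_one]
      linarith [hdet, mul_comm U.det V.det]
  refine ⟨hSO, ?_, ?_⟩
  -- trace value
  · have hAX : A * (V * Sighat * Uᵀ) = U * (Matrix.diagonal σ * Sighat) * Uᵀ := by
      rw [hA]
      calc U * Matrix.diagonal σ * Vᵀ * (V * Sighat * Uᵀ)
          = U * (Matrix.diagonal σ * ((Vᵀ * V) * Sighat)) * Uᵀ := by noncomm_ring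
      _ = _ := by rw [hV, one_mul]
    rw [hAX, Matrix.trace_mul_cycle, ← mul_assoc, hU, one_mul, hSighat,
      Matrix.diagonal_mul_diagonal, Matrix.trace_diagonal, Fin.sum_univ_three]
    fin_cases i_m <;> norm_num [Fin.ext_iff] <;> (try ring) <;> (show -σ 0 - σ 1 + σ 2 = -σ 0 - σ 1 - σ 2 + σ 2 * 2; ring)
  -- optimality
  · intro Y hY
    set W : Matrix (Fin 3) (Fin 3) ℝ := Vᵀ * Y * U with hW
    have hWo : Wᵀ * W = 1 := by
      rw [hW, Matrix.transpose_mul, Matrix.transpose_mul, Matrix.transpose_transpose]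
      calc Uᵀ * (Yᵀ * V) * (Vᵀ * Y * U)
          = Uᵀ * (Yᵀ * (V * Vᵀ) * Y) * U := by noncomm_ring
      _ = 1 := by rw [hVV, mul_one, hY.1, mul_one, hU]
    have hWd : W.det = 1 := by
      rw [hW, Matrix.det_mul, Matrix.det_mul, Matrix.det_transpose, hY.2, mul_one]
      linarith [hdet, mul_comm U.det V.det, mul_comm V.det U.det]
    have hAY : Matrix.trace (A * Y) = Matrix.trace (Matrix.diagonal σ * W) := by
      rw [hA, hW,
        show U * Matrix.diagonal σ * Vᵀ * Y = U * (Matrix.diagonal σ * (Vᵀ * Y)) by noncomm_ring,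
        Matrix.trace_mul_comm U,
        show Matrix.diagonal σ * (Vᵀ * Y) * U = Matrix.diagonal σ * (Vᵀ * Y * U) by noncomm_ring]
    have hAXval : Matrix.trace (A * (V * Sighat * Uᵀ)) = 2 * σ i_m - (σ 0 + σ 1 + σ 2) := by
      have hAX : A * (V * Sighat * Uᵀ) = U * (Matrix.diagonal σ * Sighat) * Uᵀ := by
        rw [hA]
        calc U * Matrix.diagonal σ * Vᵀ * (V * Sighat * Uᵀ)
            = U * (Matrix.diagonal σ * ((Vᵀ * V) * Sighat)) * Uᵀ := by noncomm_ring
        _ = _ := by rw [hV, one_mul]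
      rw [hAX, Matrix.trace_mul_cycle, ← mul_assoc, hU, one_mul, hSighat,
        Matrix.diagonal_mul_diagonal, Matrix.trace_diagonal, Fin.sum_univ_three]
      fin_cases i_m <;> norm_num [Fin.ext_iff] <;> (try ring) <;> (show -σ 0 - σ 1 + σ 2 = -σ 0 - σ 1 - σ 2 + σ 2 * 2; ring)
    rw [hAXval, hAY]
    have htr : Matrix.trace (Matrix.diagonal σ * W) = σ 0 * W 0 0 + σ 1 * W 1 1 + σ 2 * W 2 2 := by
      simp [Matrix.trace, Matrix.diag, Matrix.diagonal_mul, Fin.sum_univ_three]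
    rw [htr]
    have hb0 := so3_diag_lb W hWo 0
    have hb1 := so3_diag_lb W hWo 1
    have hb2 := so3_diag_lb W hWo 2
    have htge := so3_trace_ge W hWo hWd
    have hm0 := him 0; have hm1 := him 1; have hm2 := him 2
    have hmσ := hσ i_m
    nlinarith [mul_nonneg (sub_nonneg.mpr hm0) (by linarith : (0:ℝ) ≤ W 0 0 + 1),
      mul_nonneg (sub_nonneg.mpr hm1) (by linarith : (0:ℝ) ≤ W 1 1 + 1),
      mul_nonneg (sub_nonneg.mpr hm2) (by linarith : (0:ℝ) ≤ W 2 2 + 1),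
      mul_nonneg hmσ (by linarith : (0:ℝ) ≤ W 0 0 + W 1 1 + W 2 2 + 1)]
end

section
/- Let A be a real 3×3 matrix with A = U D Vᵀ, where U and V are real 3×3 orthogonal matrices, D = diag(σ_1, σ_2, σ_3) with all σ_i ≥ 0, and det(U)·det(V) = −1. Then X = −V Uᵀ belongs to SO(3), tr(A X) = −(σ_1 + σ_2 + σ_3), and tr(A X) ≤ tr(A Y) for every Y ∈ SO(3). -/
open Matrix

lemma entry_ge_neg_one (Z : Matrix (Fin 3) (Fin 3) ℝ) (hZ : Zᵀ * Z = 1) (i : Fin 3) :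
    -1 ≤ Z i i := by
  have h : (Zᵀ * Z) i i = 1 := by rw [hZ]; simp [Matrix.one_apply]
  rw [Matrix.mul_apply] at h
  simp only [Matrix.transpose_apply] at h
  have hle : Z i i * Z i i ≤ ∑ j, Z j i * Z j i :=
    Finset.single_le_sum (f := fun j => Z j i * Z j i)
      (fun j _ => mul_self_nonneg _) (Finset.mem_univ i)
  nlinarith [hle, h]

/-- Closed-form LOSSO solution in the case `det(U)·det(V) = −1`:
`X = −V Uᵀ` is optimal, with optimal value `−(σ_1 + σ_2 + σ_3)`. -/
theorem losso_closed_form_det_neg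
    (A U V : Matrix (Fin 3) (Fin 3) ℝ) (σ : Fin 3 → ℝ)
    (hσ : ∀ i, 0 ≤ σ i)
    (hU : Uᵀ * U = 1) (hV : Vᵀ * V = 1)
    (hdet : U.det * V.det = -1)
    (hA : A = U * Matrix.diagonal σ * Vᵀ) :
    SO3 (-(V * Uᵀ)) ∧
    Matrix.trace (A * (-(V * Uᵀ))) = -(σ 0 + σ 1 + σ 2) ∧
    ∀ Y : Matrix (Fin 3) (Fin 3) ℝ, SO3 Y →
      Matrix.trace (A * (-(V * Uᵀ))) ≤ Matrix.trace (A * Y) := by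
  have hUU : U * Uᵀ = 1 := mul_eq_one_comm.mp hU
  have hVV : V * Vᵀ = 1 := mul_eq_one_comm.mp hV
  -- trace value
  have htr : Matrix.trace (A * (-(V * Uᵀ))) = -(σ 0 + σ 1 + σ 2) := by
    have : A * (-(V * Uᵀ)) = -(U * Matrix.diagonal σ * Uᵀ) := by
      rw [hA]
      rw [show U * Matrix.diagonal σ * Vᵀ * -(V * Uᵀ)
        = -(U * Matrix.diagonal σ * (Vᵀ * V) * Uᵀ) by noncomm_ring]
      rw [hV]; simp [Matrix.mul_assoc]
    rw [this, Matrix.trace_neg, Matrix.trace_mul_cycle, hU, Matrix.one_mul]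
    simp [Matrix.trace, Fin.sum_univ_three]
  refine ⟨⟨?_, ?_⟩, htr, ?_⟩
  · rw [Matrix.transpose_neg, Matrix.neg_mul, Matrix.mul_neg, neg_neg,
      Matrix.transpose_mul, Matrix.transpose_transpose]
    rw [show U * Vᵀ * (V * Uᵀ) = U * (Vᵀ * V) * Uᵀ by noncomm_ring, hV]
    simpa using hUU
  · rw [show (-(V * Uᵀ) : Matrix (Fin 3) (Fin 3) ℝ) = (-1 : ℝ) • (V * Uᵀ) by simp]
    rw [Matrix.det_smul, Matrix.det_mul, Matrix.det_transpose]
    have : V.det * U.det = -1 := by linarith [hdet, mul_comm U.det V.det]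
    rw [mul_comm V.det U.det] at this ⊢
    rw [this]
    norm_num
  · intro Y hY
    obtain ⟨hYo, hYd⟩ := hY
    set Z := Vᵀ * Y * U with hZdef
    have hZo : Zᵀ * Z = 1 := by
      have h1 : Zᵀ * Z = Uᵀ * (Yᵀ * ((V * Vᵀ) * Y)) * U := by
        simp [hZdef, Matrix.transpose_mul, Matrix.mul_assoc]
      rw [h1, hVV, Matrix.one_mul, hYo, Matrix.mul_one, hU]
    have htrAY : Matrix.trace (A * Y) = ∑ i, σ i * Z i i := by
      have hAY : A * Y = U * (Matrix.diagonal σ * Z) * Uᵀ := by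
        rw [hA, hZdef]
        simp [Matrix.mul_assoc, hUU, Matrix.mul_one]
      rw [hAY, Matrix.trace_mul_comm, ← Matrix.mul_assoc, hU, Matrix.one_mul]
      simp [Matrix.trace, Matrix.diag, Matrix.mul_apply, Matrix.diagonal]
    rw [htr, htrAY]
    have : ∀ i : Fin 3, -(σ i) ≤ σ i * Z i i := by
      intro i
      have h1 := entry_ge_neg_one Z hZo i
      nlinarith [hσ i]
    calc -(σ 0 + σ 1 + σ 2) = ∑ i : Fin 3, -(σ i) := by
          rw [Fin.sum_univ_three]; ring
      _ ≤ ∑ i, σ i * Z i i := Finset.sum_le_sum fun i _ => this i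
end
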